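/- arXiv:1310.2370 — 5 statements merged into one kernel-verified Lean document; each statement's English description precedes it below -/
import Mathlib

section
/- Let R = ℤ[H]/(H^{n+1}) and for α = Σ_{i=0}^{n} a_i H^i ∈ R (a_i ∈ ℤ) and m ∈ ℤ define the tensor operation T_m(α) := Σ_{i=0}^{n} a_i H^i (1+mH)^{-i} (where (1+mH) is a unit in R). Then for all m, m' ∈ ℤ and all α ∈ R, applying the operation with the graded decomposition re-extracted at each stage gives T_{m'}(T_m(α)) = T_{m+m'}(α); i.e., the operations T_m define an action of (ℤ,+) on R. -/
open PowerSeries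
open Polynomial

/-- The tensor operation `T_m` on the model `ℤ[H]/(H^(n+1)) ⊆ ℚ[[H]]`:
`T_m (Σ a_i H^i) = Σ_{i=0}^n a_i H^i (1+mH)^{-i}`, with graded components
extracted from the input via `coeff`. Equality in the quotient ring is
expressed as equality of coefficients in degrees `≤ n`. -/
noncomputable def T (n : ℕ) (m : ℤ) (f : PowerSeries ℚ) : PowerSeries ℚ :=
  ∑ i ∈ Finset.range (n + 1),
    PowerSeries.C ((PowerSeries.coeff i) f) * PowerSeries.X ^ i *
      ((1 + PowerSeries.C (m : ℚ) * PowerSeries.X)⁻¹) ^ i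

/-- The dual operation `D (Σ a_i H^i) = Σ (-1)^i a_i H^i`. -/
noncomputable def D (f : PowerSeries ℚ) : PowerSeries ℚ :=
  PowerSeries.mk fun i => (-1) ^ i * (PowerSeries.coeff i) f

namespace TensorActionAux

/-- `w m = X (1 + m X)⁻¹`. -/
noncomputable def w (m : ℤ) : PowerSeries ℚ :=
  PowerSeries.X * ((1 + PowerSeries.C (m : ℚ) * PowerSeries.X)⁻¹)

lemma constCoeff_one_add (m : ℤ) :
    PowerSeries.constantCoeff (1 + PowerSeries.C (m : ℚ) * PowerSeries.X) ≠ 0 := by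
  simp

lemma mul_inv_one (m : ℤ) :
    (1 + PowerSeries.C (m : ℚ) * PowerSeries.X) *
      (1 + PowerSeries.C (m : ℚ) * PowerSeries.X)⁻¹ = 1 :=
  PowerSeries.mul_inv_cancel _ (constCoeff_one_add m)

/-- The ideal `(X^(n+1))`. -/
noncomputable def I (n : ℕ) : Ideal (PowerSeries ℚ) :=
  Ideal.span {(PowerSeries.X : PowerSeries ℚ) ^ (n + 1)}

noncomputable def pi (n : ℕ) : PowerSeries ℚ →+* (PowerSeries ℚ ⧸ I n) :=
  Ideal.Quotient.mk (I n)

lemma coeff_eq_of_pi_eq {n : ℕ} {a b : PowerSeries ℚ} (h : pi n a = pi n b)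
    {k : ℕ} (hk : k ≤ n) : PowerSeries.coeff k a = PowerSeries.coeff k b := by
  have hmem : a - b ∈ I n := Ideal.Quotient.eq.mp h
  have hdvd : (PowerSeries.X : PowerSeries ℚ) ^ (n + 1) ∣ a - b :=
    Ideal.mem_span_singleton.mp hmem
  have := (PowerSeries.X_pow_dvd_iff.mp hdvd) k (by omega)
  rw [map_sub] at this
  linarith

end TensorActionAux
namespace TensorActionAux

noncomputable def T' (n : ℕ) (m : ℤ) (f : PowerSeries ℚ) : PowerSeries ℚ :=
  ∑ i ∈ Finset.range (n + 1),
    PowerSeries.C ((PowerSeries.coeff i) f) * PowerSeries.X ^ i *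
      ((1 + PowerSeries.C (m : ℚ) * PowerSeries.X)⁻¹) ^ i

lemma T'_eq_aeval (n : ℕ) (m : ℤ) (f : PowerSeries ℚ) :
    T' n m f = Polynomial.aeval (w m) (trunc (n + 1) f) := by
  rw [Polynomial.aeval_def, eval₂_trunc_eq_sum_range]
  unfold T'
  refine Finset.sum_congr rfl fun i _ => ?_
  rw [mul_assoc, ← mul_pow]
  rfl

/-- `Φ s = π (aeval (w m') (trunc (n+1) s))`. -/
noncomputable def Phi (n : ℕ) (m' : ℤ) (s : PowerSeries ℚ) : PowerSeries ℚ ⧸ I n :=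
  pi n (Polynomial.aeval (w m') (trunc (n + 1) s))

lemma aeval_mem_of_dvd {n : ℕ} (m' : ℤ) {p : ℚ[X]}
    (h : (Polynomial.X : ℚ[X]) ^ (n + 1) ∣ p) :
    Polynomial.aeval (w m') p ∈ I n := by
  obtain ⟨r, rfl⟩ := h
  rw [map_mul, map_pow, Polynomial.aeval_X]
  refine Ideal.mem_span_singleton.mpr ?_
  exact Dvd.dvd.mul_right (pow_dvd_pow_of_dvd ⟨_, rfl⟩ (n + 1)) _

lemma pi_aeval_congr {n : ℕ} (m' : ℤ) {p q : ℚ[X]}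
    (h : ∀ d ≤ n, p.coeff d = q.coeff d) :
    pi n (Polynomial.aeval (w m') p) = pi n (Polynomial.aeval (w m') q) := by
  unfold pi
  rw [Ideal.Quotient.eq]
  rw [← map_sub]
  apply aeval_mem_of_dvd
  rw [Polynomial.X_pow_dvd_iff]
  intro d hd
  rw [Polynomial.coeff_sub, h d (by omega), sub_self]

lemma Phi_add (n : ℕ) (m' : ℤ) (s t : PowerSeries ℚ) :
    Phi n m' (s + t) = Phi n m' s + Phi n m' t := by
  unfold Phi
  rw [map_add, map_add, map_add]

lemma Phi_mul (n : ℕ) (m' : ℤ) (s t : PowerSeries ℚ) :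
    Phi n m' (s * t) = Phi n m' s * Phi n m' t := by
  unfold Phi
  rw [← map_mul (pi n), ← map_mul (Polynomial.aeval (w m'))]
  apply pi_aeval_congr
  intro d hd
  rw [Polynomial.coeff_mul, PowerSeries.coeff_trunc, if_pos (by omega : d < n + 1),
    PowerSeries.coeff_mul]
  refine Finset.sum_congr rfl fun ab hab => ?_
  rw [Finset.HasAntidiagonal.mem_antidiagonal] at hab
  rw [PowerSeries.coeff_trunc, PowerSeries.coeff_trunc,
    if_pos (by omega : ab.1 < n + 1), if_pos (by omega : ab.2 < n + 1)]

lemma Phi_coe (n : ℕ) (m' : ℤ) (p : ℚ[X]) :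
    Phi n m' (↑p : PowerSeries ℚ) = pi n (Polynomial.aeval (w m') p) := by
  unfold Phi
  apply pi_aeval_congr
  intro d hd
  rw [PowerSeries.coeff_trunc, if_pos (by omega : d < n + 1), Polynomial.coeff_coe]

lemma Phi_X (n : ℕ) (m' : ℤ) : Phi n m' PowerSeries.X = pi n (w m') := by
  rw [← Polynomial.coe_X, Phi_coe, Polynomial.aeval_X]

lemma Phi_C (n : ℕ) (m' : ℤ) (a : ℚ) :
    Phi n m' (PowerSeries.C a) = pi n (PowerSeries.C a) := by
  rw [← Polynomial.coe_C, Phi_coe, Polynomial.aeval_C, ← PowerSeries.C_eq_algebraMap,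
    Polynomial.coe_C]

lemma Phi_one (n : ℕ) (m' : ℤ) : Phi n m' 1 = 1 := by
  unfold Phi
  rw [trunc_one, map_one, map_one]

lemma Phi_pow (n : ℕ) (m' : ℤ) (s : PowerSeries ℚ) (j : ℕ) :
    Phi n m' (s ^ j) = (Phi n m' s) ^ j := by
  induction j with
  | zero => simpa using Phi_one n m'
  | succ j ih => rw [pow_succ, Phi_mul, ih, pow_succ]

/-- abbreviation -/
noncomputable def om (m : ℤ) : PowerSeries ℚ :=
  1 + PowerSeries.C (m : ℚ) * PowerSeries.X

lemma om_mul_inv (m : ℤ) : om m * (om m)⁻¹ = 1 :=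
  PowerSeries.mul_inv_cancel _ (by simp [om])

lemma w_eq (m : ℤ) : w m = PowerSeries.X * (om m)⁻¹ := rfl

lemma w_eq' (m : ℤ) :
    w m = PowerSeries.X * (1 + PowerSeries.C (m : ℚ) * PowerSeries.X)⁻¹ := rfl

lemma key1 (m : ℤ) : om m * w m = PowerSeries.X := by
  rw [w_eq]
  linear_combination (PowerSeries.X : PowerSeries ℚ) * om_mul_inv m

lemma C_add (m m' : ℤ) :
    PowerSeries.C ((↑(m + m') : ℚ)) =
      PowerSeries.C (m : ℚ) + PowerSeries.C (m' : ℚ) := by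
  push_cast
  rw [map_add]

lemma keyA (m m' : ℤ) :
    1 + PowerSeries.C (m : ℚ) * w m' = om (m + m') * (om m')⁻¹ := by
  have om_add : om (m + m') = om m' + PowerSeries.C (m : ℚ) * PowerSeries.X := by
    unfold om
    rw [C_add]
    ring
  rw [w_eq, om_add]
  linear_combination (-1 : PowerSeries ℚ) * om_mul_inv m'

lemma keyB (m m' : ℤ) :
    (om (m + m') * (om m')⁻¹) * (om m' * (om (m + m'))⁻¹) = 1 := by
  linear_combination (om m' * (om m')⁻¹) * om_mul_inv (m + m') + om_mul_inv m'

lemma keyC (m m' : ℤ) : (om m' * (om (m + m'))⁻¹) * w m' = w (m + m') := by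
  rw [w_eq, w_eq]
  linear_combination (PowerSeries.X * (om (m + m'))⁻¹) * om_mul_inv m'

lemma Phi_w (n : ℕ) (m m' : ℤ) : Phi n m' (w m) = pi n (w (m + m')) := by
  have h1 : pi n (om (m + m') * (om m')⁻¹) * Phi n m' (w m) = pi n (w m') := by
    have h := congrArg (Phi n m') (key1 m)
    rw [Phi_mul, Phi_X] at h
    have h2 : Phi n m' (om m) = pi n (om (m + m') * (om m')⁻¹) := by
      show Phi n m' (1 + PowerSeries.C (m : ℚ) * PowerSeries.X) = _
      rw [Phi_add, Phi_mul, Phi_one, Phi_C, Phi_X, ← keyA, map_add, map_mul, map_one]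
    rw [h2] at h
    exact h
  have hu : pi n (om (m + m') * (om m')⁻¹) * pi n (om m' * (om (m + m'))⁻¹) = 1 := by
    rw [← map_mul, keyB, map_one]
  have h3 := congrArg (fun z => pi n (om m' * (om (m + m'))⁻¹) * z) h1
  rw [← mul_assoc, mul_comm (pi n (om m' * (om (m + m'))⁻¹)), hu, one_mul] at h3
  rw [h3, ← map_mul, keyC]

lemma Phi_zero (n : ℕ) (m' : ℤ) : Phi n m' 0 = 0 := by
  unfold Phi
  rw [map_zero, map_zero, map_zero]

lemma Phi_sum (n : ℕ) (m' : ℤ) {ι : Type*} (s : Finset ι) (g : ι → PowerSeries ℚ) :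
    Phi n m' (∑ i ∈ s, g i) = ∑ i ∈ s, Phi n m' (g i) := by
  induction s using Finset.cons_induction with
  | empty => simpa using Phi_zero n m'
  | cons a s ha ih => rw [Finset.sum_cons, Phi_add, ih, Finset.sum_cons]

lemma Phi_T' (n : ℕ) (m m' : ℤ) (f : PowerSeries ℚ) :
    Phi n m' (T' n m f) = pi n (T' n (m + m') f) := by
  unfold T'
  rw [Phi_sum, map_sum]
  refine Finset.sum_congr rfl fun i _ => ?_
  rw [mul_assoc, mul_assoc, ← mul_pow, ← mul_pow, ← w_eq', ← w_eq', Phi_mul, Phi_pow,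
    Phi_w, Phi_C, map_mul (pi n), map_pow]

theorem tensor_action' (n : ℕ) (m m' : ℤ) (f : PowerSeries ℚ) :
    ∀ k ≤ n, (PowerSeries.coeff k) (T' n m' (T' n m f)) =
      (PowerSeries.coeff k) (T' n (m + m') f) := by
  intro k hk
  refine coeff_eq_of_pi_eq ?_ hk
  rw [T'_eq_aeval n m' (T' n m f)]
  exact Phi_T' n m m' f

end TensorActionAux


/-- The operations `T_m` define an action of `(ℤ,+)` on `ℤ[H]/(H^(n+1))`:
`T_{m'} (T_m α) = T_{m+m'} α`, graded components re-extracted at each stage. -/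
theorem tensor_action (n : ℕ) (m m' : ℤ) (f : PowerSeries ℚ) :
    ∀ k ≤ n, (PowerSeries.coeff k) (T n m' (T n m f)) =
      (PowerSeries.coeff k) (T n (m + m') f) := by
  have h : T = TensorActionAux.T' := rfl
  rw [h]
  exact TensorActionAux.tensor_action' n m m' f
end

section
/- Let R = ℤ[H]/(H^{n+1}). Define the dual operation D(α) := Σ_i (-1)^i a_i H^i for α = Σ_i a_i H^i, and the tensor operation T_m(α) := Σ_i a_i H^i (1+mH)^{-i}. Then for every α ∈ R and m ∈ ℤ, D(T_m(α)) = T_{-m}(D(α)), where on the left-hand side the graded components of T_m(α) are extracted before applying D. -/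
open PowerSeries

lemma rescale_C' (a r : ℚ) : rescale a (C r) = C r := by
  ext j; rw [coeff_rescale]; cases j <;> simp

lemma rescale_inv (f : PowerSeries ℚ) (h : constantCoeff f ≠ 0) :
    rescale (-1 : ℚ) f⁻¹ = (rescale (-1 : ℚ) f)⁻¹ := by
  have h2 : constantCoeff (rescale (-1 : ℚ) f) ≠ 0 := by
    rw [← coeff_zero_eq_constantCoeff, coeff_rescale]
    simpa [coeff_zero_eq_constantCoeff] using h
  rw [PowerSeries.eq_inv_iff_mul_eq_one h2, ← map_mul,
    PowerSeries.inv_mul_cancel f h, map_one]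

lemma rescale_G (m : ℚ) :
    rescale (-1 : ℚ) ((1 + C m * X)⁻¹) = (1 + C (-m) * X)⁻¹ := by
  have h : constantCoeff (1 + C m * X) ≠ 0 := by simp
  rw [rescale_inv _ h]
  congr 1
  rw [map_add, map_one, map_mul, rescale_neg_one_X, rescale_C', map_neg]
  ring

lemma key (m : ℚ) (i j : ℕ) :
    coeff j (((1 + C (-m) * X)⁻¹) ^ i) =
      (-1 : ℚ) ^ j * coeff j (((1 + C m * X)⁻¹) ^ i) := by
  rw [← rescale_G, ← map_pow, coeff_rescale]

/-- Compatibility of dual and tensor: `D (T_m α) = T_{-m} (D α)` in `ℤ[H]/(H^(n+1))`. -/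
theorem dual_tensor (n : ℕ) (m : ℤ) (f : PowerSeries ℚ) :
    ∀ k ≤ n, (PowerSeries.coeff k) (D (T n m f)) =
      (PowerSeries.coeff k) (T n (-m) (D f)) := by
  intro k hk
  simp only [D, T, coeff_mk, map_sum, Int.cast_neg]
  rw [Finset.mul_sum]
  refine Finset.sum_congr rfl fun i _ => ?_
  rw [mul_assoc, mul_assoc, coeff_C_mul, coeff_C_mul, coeff_X_pow_mul',
    coeff_X_pow_mul']
  split_ifs with h
  · rw [key (m : ℚ) i (k - i)]
    have e : (-1 : ℚ) ^ i * (-1 : ℚ) ^ (k - i) = (-1 : ℚ) ^ k := by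
      rw [← pow_add, Nat.add_sub_cancel' h]
    calc (-1:ℚ) ^ k * ((coeff i) f * (coeff (k - i)) ((1 + C (m:ℚ) * X)⁻¹ ^ i))
        = ((-1:ℚ)^i * (-1:ℚ)^(k-i)) * ((coeff i) f * (coeff (k - i)) ((1 + C (m:ℚ) * X)⁻¹ ^ i)) := by rw [e]
      _ = (-1) ^ i * (coeff i) f * ((-1) ^ (k - i) * (coeff (k - i)) ((1 + C (m:ℚ) * X)⁻¹ ^ i)) := by ring
  · simp
end

section
/- Let R = ℤ[H]/(H^{n+1}) with tensor operation T_m(α) := Σ_i a_i H^i (1+mH)^{-i} for α = Σ a_i H^i. Then for any e, m ∈ ℤ and any α ∈ R, T_m((1+eH)·α) = (1+(e+m)H)·(1+mH)^{-1}·T_m(α). -/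
open PowerSeries

/-- Rank-one projection formula: `T_m ((1+eH)·α) = (1+(e+m)H)(1+mH)^{-1} · T_m α`
in `ℤ[H]/(H^(n+1))`. -/
theorem tensor_line_bundle (n : ℕ) (e m : ℤ) (α : PowerSeries ℚ) :
    ∀ k ≤ n, (PowerSeries.coeff k)
        (T n m ((1 + PowerSeries.C (e : ℚ) * PowerSeries.X) * α)) =
      (PowerSeries.coeff k)
        ((1 + PowerSeries.C ((e + m : ℤ) : ℚ) * PowerSeries.X) *
          (1 + PowerSeries.C (m : ℚ) * PowerSeries.X)⁻¹ * T n m α) := by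
  intro k hk
  set u := (1 + PowerSeries.C (m : ℚ) * PowerSeries.X)⁻¹ with hudef
  have hunit : (1 + PowerSeries.C (m : ℚ) * PowerSeries.X) * u = 1 := by
    rw [hudef]
    exact PowerSeries.mul_inv_cancel _ (by simp)
  have hfac : (1 + PowerSeries.C ((e + m : ℤ) : ℚ) * PowerSeries.X) * u
      = 1 + PowerSeries.C (e : ℚ) * PowerSeries.X * u := by
    have h1 : (1 + PowerSeries.C ((e + m : ℤ) : ℚ) * PowerSeries.X)
        = (1 + PowerSeries.C (m : ℚ) * PowerSeries.X)
          + PowerSeries.C (e : ℚ) * PowerSeries.X := by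
      push_cast
      rw [map_add]
      ring
    rw [h1, add_mul, hunit]
  have key : (1 + PowerSeries.C ((e + m : ℤ) : ℚ) * PowerSeries.X) * u * T n m α
      = T n m ((1 + PowerSeries.C (e : ℚ) * PowerSeries.X) * α)
        + PowerSeries.C (e : ℚ) * PowerSeries.C (PowerSeries.coeff n α)
          * (PowerSeries.X ^ (n + 1) * u ^ (n + 1)) := by
    have hT1 : T n m ((1 + PowerSeries.C (e : ℚ) * PowerSeries.X) * α)
        = T n m α + ∑ i ∈ Finset.range n,
            PowerSeries.C (e : ℚ) * PowerSeries.C (PowerSeries.coeff i α)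
              * (PowerSeries.X ^ (i + 1) * u ^ (i + 1)) := by
      have hexp : (1 + PowerSeries.C (e : ℚ) * PowerSeries.X) * α
          = α + PowerSeries.C (e : ℚ) * (PowerSeries.X * α) := by ring
      unfold T
      rw [hexp]
      simp only [map_add, PowerSeries.coeff_C_mul, map_mul, add_mul]
      rw [Finset.sum_add_distrib]
      congr 1
      rw [Finset.sum_range_succ']
      have h0 : (PowerSeries.coeff 0) (PowerSeries.X * α) = 0 := by
        simp [PowerSeries.coeff_zero_eq_constantCoeff]
      rw [h0]
      simp only [map_zero, zero_mul, mul_zero, add_zero, PowerSeries.coeff_succ_X_mul]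
      apply Finset.sum_congr rfl
      intro i _
      ring
    have h2 : PowerSeries.C (e : ℚ) * PowerSeries.X * u * T n m α
        = (∑ i ∈ Finset.range n,
            PowerSeries.C (e : ℚ) * PowerSeries.C (PowerSeries.coeff i α)
              * (PowerSeries.X ^ (i + 1) * u ^ (i + 1)))
          + PowerSeries.C (e : ℚ) * PowerSeries.C (PowerSeries.coeff n α)
            * (PowerSeries.X ^ (n + 1) * u ^ (n + 1)) := by
      unfold T
      rw [Finset.mul_sum, ← Finset.sum_range_succ
        (fun i => PowerSeries.C (e : ℚ) * PowerSeries.C (PowerSeries.coeff i α)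
              * (PowerSeries.X ^ (i + 1) * u ^ (i + 1)))]
      apply Finset.sum_congr rfl
      intro i _
      ring
    rw [hfac, add_mul, one_mul, hT1, h2]
    ring
  rw [key, map_add]
  have hdvd : PowerSeries.X ^ (n + 1) ∣
      PowerSeries.C (e : ℚ) * PowerSeries.C (PowerSeries.coeff n α)
        * (PowerSeries.X ^ (n + 1) * u ^ (n + 1)) :=
    ⟨PowerSeries.C (e : ℚ) * PowerSeries.C (PowerSeries.coeff n α) * u ^ (n + 1), by ring⟩
  rw [PowerSeries.X_pow_dvd_iff.mp hdvd k (by omega), add_zero]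
end

section
/- Let R = ℤ[H]/(H^{n+1}) with tensor operation T_m as above. Then for any r ≥ 1, integers e_1, …, e_r, m, and any α ∈ R, T_m(Π_{j=1}^{r}(1+e_j H)·α) = Π_{j=1}^{r}(1+(e_j+m)H) · (1+mH)^{-r} · T_m(α). -/
open PowerSeries

set_option maxHeartbeats 1000000

lemma unit_mul (m : ℤ) :
    (1 + PowerSeries.C (m:ℚ) * PowerSeries.X) *
      (1 + PowerSeries.C (m:ℚ) * PowerSeries.X)⁻¹ = 1 := by
  apply PowerSeries.mul_inv_cancel
  simp

lemma key_identity (n : ℕ) (m e : ℤ) (f : PowerSeries ℚ) :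
    T n m ((1 + PowerSeries.C (e:ℚ) * PowerSeries.X) * f)
      + PowerSeries.C (e:ℚ) * PowerSeries.C ((PowerSeries.coeff n) f)
          * PowerSeries.X ^ (n+1)
          * ((1 + PowerSeries.C (m:ℚ) * PowerSeries.X)⁻¹) ^ (n+1)
    = (1 + PowerSeries.C (e:ℚ) * PowerSeries.X *
        (1 + PowerSeries.C (m:ℚ) * PowerSeries.X)⁻¹) * T n m f := by
  set u := (1 + PowerSeries.C (m:ℚ) * PowerSeries.X)⁻¹ with hu
  have h1 : T n m ((1 + PowerSeries.C (e:ℚ) * PowerSeries.X) * f)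
      = T n m f + ∑ i ∈ Finset.range (n+1),
          PowerSeries.C ((e:ℚ) * (PowerSeries.coeff i) (PowerSeries.X * f))
            * PowerSeries.X ^ i * u ^ i := by
    rw [T, T, ← Finset.sum_add_distrib]
    apply Finset.sum_congr rfl
    intro i _
    rw [add_mul, one_mul, mul_assoc (PowerSeries.C (e:ℚ)), map_add,
      PowerSeries.coeff_C_mul, map_add, map_mul]
    ring
  have h2 : ∑ i ∈ Finset.range (n+1),
          PowerSeries.C ((e:ℚ) * (PowerSeries.coeff i) (PowerSeries.X * f))
            * PowerSeries.X ^ i * u ^ i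
      = ∑ i ∈ Finset.range n,
          PowerSeries.C ((e:ℚ) * (PowerSeries.coeff i) f)
            * PowerSeries.X ^ (i+1) * u ^ (i+1) := by
    rw [Finset.sum_range_succ']
    simp [PowerSeries.coeff_succ_X_mul]
  have h3 : (PowerSeries.C (e:ℚ) * PowerSeries.X * u) * T n m f
      = (∑ i ∈ Finset.range n,
          PowerSeries.C ((e:ℚ) * (PowerSeries.coeff i) f)
            * PowerSeries.X ^ (i+1) * u ^ (i+1))
        + PowerSeries.C (e:ℚ) * PowerSeries.C ((PowerSeries.coeff n) f)
          * PowerSeries.X ^ (n+1) * u ^ (n+1) := by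
    rw [T, Finset.mul_sum, Finset.sum_range_succ]
    congr 1
    · apply Finset.sum_congr rfl
      intro i _
      rw [map_mul]
      ring
    · ring
  rw [h1, h2, add_mul, one_mul, h3]
  ring

lemma key_dvd (n : ℕ) (m e : ℤ) (f : PowerSeries ℚ) :
    (PowerSeries.X : PowerSeries ℚ) ^ (n+1) ∣
      ((1 + PowerSeries.C (((e + m : ℤ)) : ℚ) * PowerSeries.X) *
          (1 + PowerSeries.C (m:ℚ) * PowerSeries.X)⁻¹ * T n m f
        - T n m ((1 + PowerSeries.C (e:ℚ) * PowerSeries.X) * f)) := by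
  have hsplit : (1 + PowerSeries.C (((e + m : ℤ)) : ℚ) * PowerSeries.X)
      = (1 + PowerSeries.C (m:ℚ) * PowerSeries.X)
        + PowerSeries.C (e:ℚ) * PowerSeries.X := by
    push_cast
    rw [map_add]
    ring
  have hfac : (1 + PowerSeries.C (((e + m : ℤ)) : ℚ) * PowerSeries.X) *
      (1 + PowerSeries.C (m:ℚ) * PowerSeries.X)⁻¹
      = 1 + PowerSeries.C (e:ℚ) * PowerSeries.X *
          (1 + PowerSeries.C (m:ℚ) * PowerSeries.X)⁻¹ := by
    rw [hsplit, add_mul, unit_mul, mul_assoc]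
  rw [hfac, ← key_identity, add_sub_cancel_left]
  exact ⟨PowerSeries.C (e:ℚ) * PowerSeries.C ((PowerSeries.coeff n) f)
      * ((1 + PowerSeries.C (m:ℚ) * PowerSeries.X)⁻¹) ^ (n+1), by ring⟩

lemma main_dvd (n : ℕ) (m : ℤ) (e : ℕ → ℤ) (α : PowerSeries ℚ) (r : ℕ) :
    (PowerSeries.X : PowerSeries ℚ) ^ (n+1) ∣
      ((∏ j ∈ Finset.range r,
            (1 + PowerSeries.C ((e j + m : ℤ) : ℚ) * PowerSeries.X)) *
          ((1 + PowerSeries.C (m:ℚ) * PowerSeries.X)⁻¹) ^ r * T n m α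
        - T n m ((∏ j ∈ Finset.range r,
            (1 + PowerSeries.C (e j : ℚ) * PowerSeries.X)) * α)) := by
  induction r with
  | zero => simp
  | succ r ih =>
    have harg : (∏ j ∈ Finset.range (r+1),
          (1 + PowerSeries.C (e j : ℚ) * PowerSeries.X)) * α
        = (1 + PowerSeries.C (e r : ℚ) * PowerSeries.X) *
            ((∏ j ∈ Finset.range r,
              (1 + PowerSeries.C (e j : ℚ) * PowerSeries.X)) * α) := by
      rw [Finset.prod_range_succ]; ring
    rw [harg]
    have h1 := key_dvd n m (e r)
        ((∏ j ∈ Finset.range r, (1 + PowerSeries.C (e j : ℚ) * PowerSeries.X)) * α)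
    have h2 : (PowerSeries.X : PowerSeries ℚ) ^ (n+1) ∣
        ((1 + PowerSeries.C ((e r + m : ℤ) : ℚ) * PowerSeries.X) *
            (1 + PowerSeries.C (m:ℚ) * PowerSeries.X)⁻¹) *
          ((∏ j ∈ Finset.range r,
              (1 + PowerSeries.C ((e j + m : ℤ) : ℚ) * PowerSeries.X)) *
            ((1 + PowerSeries.C (m:ℚ) * PowerSeries.X)⁻¹) ^ r * T n m α
          - T n m ((∏ j ∈ Finset.range r,
              (1 + PowerSeries.C (e j : ℚ) * PowerSeries.X)) * α)) :=
      Dvd.dvd.mul_left ih _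
    have := dvd_add h2 h1
    convert this using 1
    rw [Finset.prod_range_succ]
    ring

/-- Aluffi's formula `(c(𝔈) ∩ α) ⊗ 𝔏 = c(𝔈⊗𝔏) c(𝔏)^{-r} ∩ (α ⊗ 𝔏)` for a split
bundle of rank `r`: `T_m (Π_{j=1}^r (1+e_j H) · α) = Π (1+(e_j+m)H) · (1+mH)^{-r} · T_m α`. -/
theorem tensor_split_bundle (n : ℕ) (r : ℕ) (hr : 1 ≤ r) (e : ℕ → ℤ) (m : ℤ)
    (α : PowerSeries ℚ) :
    ∀ k ≤ n, (PowerSeries.coeff k)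
        (T n m ((∏ j ∈ Finset.range r,
          (1 + PowerSeries.C (e j : ℚ) * PowerSeries.X)) * α)) =
      (PowerSeries.coeff k)
        ((∏ j ∈ Finset.range r,
            (1 + PowerSeries.C ((e j + m : ℤ) : ℚ) * PowerSeries.X)) *
          ((1 + PowerSeries.C (m : ℚ) * PowerSeries.X)⁻¹) ^ r * T n m α) := by
  intro k hk
  have h := main_dvd n m e α r
  rw [PowerSeries.X_pow_dvd_iff] at h
  have hz := h k (by omega)
  rw [map_sub, sub_eq_zero] at hz
  exact hz.symm
end

section
/- In R = ℤ[H]/(H^5), the following identity holds: [(1+H)^5·2H - (1+H)^2·H^3]·(1+2H)^{-1} + (1+H)^4·H - [(1+H)^5·2H^2 + (1+H)^3·H^3]·((1+H)(1+2H))^{-1} - (1+H)^5·3H·(1+3H)^{-1} = 2H^2 - 4H^3 + 10H^4. -/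
open PowerSeries

/-- The inclusion-exclusion computation of `𝔐(Z) = c_SM(Q) + c_SM(H) - c_SM(X) - c_F(Z)`
in `ℤ[H]/(H^5)`. -/
theorem milnor_inclusion_exclusion (k : ℕ) (hk : k ≤ 4) :
    (PowerSeries.coeff (R := ℚ) k)
        (((1 + PowerSeries.X) ^ 5 * (2 * PowerSeries.X) -
            (1 + PowerSeries.X) ^ 2 * (PowerSeries.X : PowerSeries ℚ) ^ 3) *
            (1 + 2 * PowerSeries.X)⁻¹ +
          (1 + PowerSeries.X) ^ 4 * PowerSeries.X -
          ((1 + PowerSeries.X) ^ 5 * (2 * (PowerSeries.X : PowerSeries ℚ) ^ 2) +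
              (1 + PowerSeries.X) ^ 3 * PowerSeries.X ^ 3) *
            (((1 + PowerSeries.X) * (1 + 2 * PowerSeries.X))⁻¹) -
          (1 + PowerSeries.X) ^ 5 * (3 * PowerSeries.X) * (1 + 3 * PowerSeries.X)⁻¹) =
      (PowerSeries.coeff (R := ℚ) k)
        (2 * (PowerSeries.X : PowerSeries ℚ) ^ 2 - 4 * PowerSeries.X ^ 3 +
          10 * PowerSeries.X ^ 4) := by
  set Xp : PowerSeries ℚ := PowerSeries.X with hX
  set w : PowerSeries ℚ := (1 + 2 * Xp)⁻¹ with hw0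
  set u : PowerSeries ℚ := ((1 + Xp) * (1 + 2 * Xp))⁻¹ with hu0
  set v : PowerSeries ℚ := (1 + 3 * Xp)⁻¹ with hv0
  have hw : (1 + 2 * Xp) * w = 1 :=
    PowerSeries.mul_inv_cancel _ (by simp [hX])
  have hu : ((1 + Xp) * (1 + 2 * Xp)) * u = 1 :=
    PowerSeries.mul_inv_cancel _ (by simp [hX])
  have hv : (1 + 3 * Xp) * v = 1 :=
    PowerSeries.mul_inv_cancel _ (by simp [hX])
  have hD : ((1 + Xp) * (1 + 2 * Xp) * (1 + 3 * Xp)) ≠ 0 := by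
    intro h
    have := congrArg (PowerSeries.constantCoeff (R := ℚ)) h
    simp [hX] at this
  set T : PowerSeries ℚ := 2 * Xp ^ 2 - 4 * Xp ^ 3 + 10 * Xp ^ 4 with hT
  set E : PowerSeries ℚ :=
      ((1 + Xp) ^ 5 * (2 * Xp) - (1 + Xp) ^ 2 * Xp ^ 3) * w +
        (1 + Xp) ^ 4 * Xp -
        ((1 + Xp) ^ 5 * (2 * Xp ^ 2) + (1 + Xp) ^ 3 * Xp ^ 3) * u -
        (1 + Xp) ^ 5 * (3 * Xp) * v with hE
  have key : E = T - 32 * Xp ^ 5 * v := by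
    have h2 : E * ((1 + Xp) * (1 + 2 * Xp) * (1 + 3 * Xp)) =
        (T - 32 * Xp ^ 5 * v) * ((1 + Xp) * (1 + 2 * Xp) * (1 + 3 * Xp)) := by
      rw [hE, hT]
      linear_combination
        (((1 + Xp) ^ 5 * (2 * Xp) - (1 + Xp) ^ 2 * Xp ^ 3) * (1 + Xp) * (1 + 3 * Xp)) * hw -
        (((1 + Xp) ^ 5 * (2 * Xp ^ 2) + (1 + Xp) ^ 3 * Xp ^ 3) * (1 + 3 * Xp)) * hu -
        ((1 + Xp) ^ 5 * (3 * Xp) * (1 + Xp) * (1 + 2 * Xp)) * hv +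
        (32 * Xp ^ 5 * (1 + Xp) * (1 + 2 * Xp)) * hv
    exact mul_right_cancel₀ hD h2
  rw [key, sub_eq_add_neg, map_add, show -(32 * Xp ^ 5 * v) = (-32 * v) * Xp ^ 5 by ring,
    PowerSeries.coeff_mul_X_pow']
  have h5 : ¬ (5 ≤ k) := by omega
  simp [h5]
end
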